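/- For every n divisible by 4, there exists a set S of n points on a circle of radius 1/√2 such that exactly n unordered pairs of points of S are at distance 1. -/

import Mathlib

open Real Finset

noncomputable def pt (θ : ℝ) : EuclideanSpace ℝ (Fin 2) :=
  WithLp.toLp 2 ![Real.cos θ / Real.sqrt 2, Real.sin θ / Real.sqrt 2]

lemma sqrt2_sq : Real.sqrt 2 * Real.sqrt 2 = 2 := Real.mul_self_sqrt (by norm_num)

lemma dist_pt (a b : ℝ) : dist (pt a) (pt b) = Real.sqrt (1 - Real.cos (a - b)) := by
  rw [EuclideanSpace.dist_eq]
  congr 1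
  rw [Fin.sum_univ_two]
  simp only [pt, PiLp.toLp_apply, Matrix.cons_val_zero, Matrix.cons_val_one, Matrix.head_cons, Real.dist_eq,
    sq_abs]
  have h2 := sqrt2_sq
  have hs : Real.sqrt 2 ≠ 0 := by positivity
  rw [Real.cos_sub]
  have ca := Real.sin_sq_add_cos_sq a
  have cb := Real.sin_sq_add_cos_sq b
  field_simp
  nlinarith [ca, cb, h2]

lemma dist_pt_center (a : ℝ) : dist (pt a) 0 = 1 / Real.sqrt 2 := by
  rw [EuclideanSpace.dist_eq, Fin.sum_univ_two]
  simp only [pt, PiLp.toLp_apply, Matrix.cons_val_zero, Matrix.cons_val_one, Matrix.head_cons, Real.dist_eq,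
    PiLp.zero_apply, sub_zero, sq_abs]
  have h2 := sqrt2_sq
  have hs : Real.sqrt 2 ≠ 0 := by positivity
  have ca := Real.sin_sq_add_cos_sq a
  have : (Real.cos a / Real.sqrt 2) ^ 2 + (Real.sin a / Real.sqrt 2) ^ 2 = (1 / Real.sqrt 2)^2 := by
    field_simp
    linarith
  rw [this, Real.sqrt_sq (by positivity)]

lemma dist_pt_eq_one (a b : ℝ) : dist (pt a) (pt b) = 1 ↔ Real.cos (a - b) = 0 := by
  rw [dist_pt, Real.sqrt_eq_one]
  constructor <;> intro h <;> linarith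

lemma pt_inj (a b : ℝ) (h : pt a = pt b) : Real.cos (a - b) = 1 := by
  have : dist (pt a) (pt b) = 0 := by rw [h, dist_self]
  rw [dist_pt] at this
  have h1 : 1 - Real.cos (a - b) ≤ 0 := by
    by_contra hc
    push_neg at hc
    exact absurd this (by positivity)
  have := Real.cos_le_one (a - b)
  linarith

open Real Finset

lemma int_aux {m u v a b c : ℤ} (hm : 0 < m) (hu : 0 ≤ u) (hu' : u < m)
    (hv : 0 ≤ v) (hv' : v < m) (h : (u + m * a) - (v + m * b) = c * m) :
    u = v ∧ a - b = c := by
  have hdvd : m ∣ (u - v) := ⟨c - a + b, by linarith [h]⟩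
  have h0 : u - v = 0 := Int.eq_zero_of_abs_lt_dvd hdvd (by rw [abs_lt]; omega)
  have huv : u = v := by omega
  refine ⟨huv, ?_⟩
  have h2 : m * (a - b) = m * c := by rw [huv] at h; ring_nf; ring_nf at h; linarith
  have := mul_left_cancel₀ (by omega : m ≠ 0) h2
  omega

def enc (m i : ℕ) : ℕ := i / 4 + m * (i % 4)

lemma enc_lt {m i : ℕ} (h : i < 4 * m) : enc m i < 4 * m := by
  have h4 : i % 4 < 4 := Nat.mod_lt _ (by norm_num)
  have hmul : m * (i % 4) ≤ m * 3 := Nat.mul_le_mul_left _ (by omega)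
  unfold enc; omega

lemma enc_cast (m i : ℕ) : (enc m i : ℤ) = ((i / 4 : ℕ) : ℤ) + (m : ℤ) * ((i % 4 : ℕ) : ℤ) := by
  unfold enc; push_cast; ring

lemma div4_lt {m i : ℕ} (hi : i < 4 * m) : ((i / 4 : ℕ) : ℤ) < (m : ℤ) := by
  have : i / 4 < m := by omega
  exact_mod_cast this

lemma enc_key {m i j : ℕ} (hm : 0 < m) (hi : i < 4 * m) (hj : j < 4 * m) :
    (∃ k : ℤ, (enc m i : ℤ) - enc m j = (2 * k + 1) * m) ↔
      (i / 4 = j / 4 ∧ (i % 4 + j % 4) % 2 = 1) := by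
  have hm' : (0 : ℤ) < m := by exact_mod_cast hm
  constructor
  · rintro ⟨k, hk⟩
    rw [enc_cast, enc_cast] at hk
    obtain ⟨h1, h2⟩ := int_aux (a := ((i % 4 : ℕ) : ℤ)) (b := ((j % 4 : ℕ) : ℤ))
      (c := 2 * k + 1) hm' (by positivity) (div4_lt hi) (by positivity) (div4_lt hj)
      (by linarith [hk])
    omega
  · rintro ⟨hd, hp⟩
    refine ⟨(((i % 4 : ℕ) : ℤ) - ((j % 4 : ℕ) : ℤ) - 1) / 2, ?_⟩
    rw [enc_cast, enc_cast]
    have h21 : 2 * ((((i % 4 : ℕ) : ℤ) - ((j % 4 : ℕ) : ℤ) - 1) / 2) + 1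
        = ((i % 4 : ℕ) : ℤ) - ((j % 4 : ℕ) : ℤ) := by omega
    rw [h21]
    have hd' : ((i / 4 : ℕ) : ℤ) = ((j / 4 : ℕ) : ℤ) := by exact_mod_cast hd
    linear_combination hd'

lemma enc_inj {m i j : ℕ} (hm : 0 < m) (hi : i < 4 * m) (hj : j < 4 * m)
    (h : enc m i = enc m j) : i = j := by
  have hm' : (0 : ℤ) < m := by exact_mod_cast hm
  have h' : ((enc m i : ℤ)) = enc m j := by exact_mod_cast h
  rw [enc_cast, enc_cast] at h'
  obtain ⟨h1, h2⟩ := int_aux (a := ((i % 4 : ℕ) : ℤ)) (b := ((j % 4 : ℕ) : ℤ)) (c := 0) hm'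
    (by positivity) (div4_lt hi) (by positivity) (div4_lt hj) (by linarith [h'])
  omega
open Real Finset

noncomputable def ang (m i : ℕ) : ℝ := Real.pi / (2 * m) * (enc m i : ℝ)

lemma ang_sub (m i j : ℕ) :
    ang m i - ang m j = Real.pi / (2 * m) * ((enc m i : ℝ) - (enc m j : ℝ)) := by
  unfold ang; ring

lemma hrw {m : ℕ} (hm : 0 < m) (k : ℤ) :
    (2 * (k : ℝ) + 1) * Real.pi / 2 = Real.pi / (2 * m) * ((2 * (k : ℝ) + 1) * m) := by
  have hm' : (m : ℝ) ≠ 0 := Nat.cast_ne_zero.mpr (by omega)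
  field_simp

lemma cos_ang_iff {m i j : ℕ} (hm : 0 < m) (hi : i < 4 * m) (hj : j < 4 * m) :
    Real.cos (ang m i - ang m j) = 0 ↔ (i / 4 = j / 4 ∧ (i % 4 + j % 4) % 2 = 1) := by
  have hm' : (m : ℝ) ≠ 0 := Nat.cast_ne_zero.mpr (by omega)
  have hne : Real.pi / (2 * m) ≠ 0 := by positivity
  rw [Real.cos_eq_zero_iff, ← enc_key hm hi hj]
  constructor
  · rintro ⟨k, hk⟩
    refine ⟨k, ?_⟩
    rw [ang_sub, hrw hm k] at hk
    have := mul_left_cancel₀ hne hk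
    exact_mod_cast this
  · rintro ⟨k, hk⟩
    refine ⟨k, ?_⟩
    rw [ang_sub, hrw hm k]
    congr 1
    exact_mod_cast hk

lemma ang_nonneg (m i : ℕ) : 0 ≤ ang m i := by unfold ang; positivity

lemma ang_lt {m i : ℕ} (hm : 0 < m) (hi : i < 4 * m) : ang m i < 2 * Real.pi := by
  have hm' : (m : ℝ) ≠ 0 := Nat.cast_ne_zero.mpr (by omega)
  have hm0 : (0 : ℝ) < m := by exact_mod_cast hm
  have he : (enc m i : ℝ) < 4 * m := by exact_mod_cast enc_lt hi
  have hpos : (0 : ℝ) < Real.pi / (2 * m) := by positivity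
  have := mul_lt_mul_of_pos_left he hpos
  unfold ang
  calc Real.pi / (2 * m) * (enc m i : ℝ) < Real.pi / (2 * m) * (4 * m) := this
    _ = 2 * Real.pi := by field_simp; ring

lemma fpt_inj {m i j : ℕ} (hm : 0 < m) (hi : i < 4 * m) (hj : j < 4 * m)
    (h : pt (ang m i) = pt (ang m j)) : i = j := by
  have hc := pt_inj _ _ h
  have h1 := ang_nonneg m i
  have h2 := ang_nonneg m j
  have h3 := ang_lt hm hi
  have h4 := ang_lt hm hj
  have h0 : ang m i - ang m j = 0 :=
    (Real.cos_eq_one_iff_of_lt_of_lt (by linarith) (by linarith)).mp hc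
  have hm' : (m : ℝ) ≠ 0 := Nat.cast_ne_zero.mpr (by omega)
  have hne : Real.pi / (2 * m) ≠ 0 := by positivity
  rw [ang_sub] at h0
  have : (enc m i : ℝ) = (enc m j : ℝ) := by
    rcases mul_eq_zero.mp h0 with h | h
    · exact absurd h hne
    · linarith
  exact enc_inj hm hi hj (by exact_mod_cast this)

lemma card_B {m i : ℕ} (hm : 0 < m) (hi : i < 4 * m) :
    ((range (4 * m)).filter (fun j => i / 4 = j / 4 ∧ (i % 4 + j % 4) % 2 = 1)).card = 2 := by
  by_cases h : i % 4 % 2 = 0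
  · have hset : (range (4 * m)).filter (fun j => i / 4 = j / 4 ∧ (i % 4 + j % 4) % 2 = 1)
        = {4 * (i / 4) + 1, 4 * (i / 4) + 3} := by
      ext j
      simp only [mem_filter, mem_range, mem_insert, mem_singleton]
      omega
    rw [hset, card_insert_of_notMem (by simp), card_singleton]
  · have hset : (range (4 * m)).filter (fun j => i / 4 = j / 4 ∧ (i % 4 + j % 4) % 2 = 1)
        = {4 * (i / 4), 4 * (i / 4) + 2} := by
      ext j
      simp only [mem_filter, mem_range, mem_insert, mem_singleton]
      omega
    rw [hset, card_insert_of_notMem (by simp), card_singleton]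

lemma card_A {m : ℕ} (hm : 0 < m) :
    ((range (4 * m) ×ˢ range (4 * m)).filter
      (fun p : ℕ × ℕ => p.1 / 4 = p.2 / 4 ∧ (p.1 % 4 + p.2 % 4) % 2 = 1)).card = 8 * m := by
  set A := (range (4 * m) ×ˢ range (4 * m)).filter
      (fun p : ℕ × ℕ => p.1 / 4 = p.2 / 4 ∧ (p.1 % 4 + p.2 % 4) % 2 = 1) with hA
  have hmem : ∀ p ∈ A, p.1 ∈ range (4 * m) := by
    intro p hp
    rw [hA, mem_filter, mem_product] at hp
    exact hp.1.1
  rw [Finset.card_eq_sum_card_fiberwise hmem]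
  have hfib : ∀ i ∈ range (4 * m), (A.filter (fun p => p.1 = i)).card = 2 := by
    intro i hi
    rw [mem_range] at hi
    have himg : A.filter (fun p => p.1 = i)
        = ((range (4 * m)).filter (fun j => i / 4 = j / 4 ∧ (i % 4 + j % 4) % 2 = 1)).image
            (Prod.mk i) := by
      ext ⟨a, b⟩
      simp only [hA, mem_filter, mem_product, mem_image, mem_range, Prod.mk.injEq]
      constructor
      · rintro ⟨⟨⟨ha, hb⟩, hc⟩, rfl⟩
        exact ⟨b, ⟨hb, hc⟩, rfl, rfl⟩
      · rintro ⟨x, ⟨hx, hc⟩, rfl, rfl⟩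
        exact ⟨⟨⟨hi, hx⟩, hc⟩, rfl⟩
    rw [himg, Finset.card_image_of_injective _ (fun x y hxy => by
      simpa using hxy : Function.Injective (Prod.mk i))]
    exact card_B hm hi
  rw [Finset.sum_congr rfl hfib, Finset.sum_const, card_range, smul_eq_mul]
  ring

open Classical in
/-- Number of ordered pairs of distinct points of `S` at distance exactly `1`
(twice the number of unordered such pairs). -/
noncomputable def unitPairs {d : ℕ} (S : Finset (EuclideanSpace ℝ (Fin d))) : ℕ :=
  (S.offDiag.filter fun p => dist p.1 p.2 = 1).card

/-- For every `n` divisible by `4` there are `n` points on a circle of radius `1/√2`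
with exactly `n` unit-distance pairs. -/
theorem stmt_2 (n : ℕ) (hn : 4 ∣ n) :
    ∃ (S : Finset (EuclideanSpace ℝ (Fin 2))) (c : EuclideanSpace ℝ (Fin 2)),
      S.card = n ∧ (∀ x ∈ S, dist x c = 1 / Real.sqrt 2) ∧ unitPairs S = 2 * n := by
  classical
  obtain ⟨m, rfl⟩ := hn
  rcases Nat.eq_zero_or_pos m with rfl | hm
  · exact ⟨∅, 0, by simp, by simp, by simp [unitPairs]⟩
  · refine ⟨(range (4 * m)).image (fun i => pt (ang m i)), 0, ?_, ?_, ?_⟩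
    · rw [Finset.card_image_of_injOn, card_range]
      intro i hi j hj h
      exact fpt_inj hm (mem_range.mp hi) (mem_range.mp hj) h
    · rintro x hx
      obtain ⟨i, -, rfl⟩ := mem_image.mp hx
      exact dist_pt_center _
    · unfold unitPairs
      rw [show 2 * (4 * m) = 8 * m by ring, ← card_A hm]
      symm
      apply Finset.card_bij (fun (p : ℕ × ℕ) _ => (pt (ang m p.1), pt (ang m p.2)))
      · rintro ⟨a, b⟩ hp
        rw [mem_filter, mem_product] at hp
        obtain ⟨⟨ha, hb⟩, hc⟩ := hp
        rw [mem_range] at ha hb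
        have hne : a ≠ b := by obtain ⟨h1, h2⟩ := hc; omega
        rw [mem_filter, Finset.mem_offDiag]
        refine ⟨⟨mem_image.mpr ⟨a, mem_range.mpr ha, rfl⟩,
          mem_image.mpr ⟨b, mem_range.mpr hb, rfl⟩, ?_⟩, ?_⟩
        · intro h; exact hne (fpt_inj hm ha hb h)
        · exact (dist_pt_eq_one _ _).mpr ((cos_ang_iff hm ha hb).mpr hc)
      · rintro ⟨a, b⟩ hab ⟨c, d⟩ hcd h
        rw [mem_filter, mem_product, mem_range, mem_range] at hab hcd
        obtain ⟨⟨ha, hb⟩, -⟩ := hab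
        obtain ⟨⟨hc, hd⟩, -⟩ := hcd
        rw [Prod.mk.injEq] at h ⊢
        exact ⟨fpt_inj hm ha hc h.1, fpt_inj hm hb hd h.2⟩
      · rintro ⟨x, y⟩ hxy
        rw [mem_filter, Finset.mem_offDiag] at hxy
        obtain ⟨⟨hx, hy, hne⟩, hd⟩ := hxy
        obtain ⟨a, ha, rfl⟩ := mem_image.mp hx
        obtain ⟨b, hb, rfl⟩ := mem_image.mp hy
        rw [mem_range] at ha hb
        refine ⟨(a, b), ?_, rfl⟩
        rw [mem_filter, mem_product]
        exact ⟨⟨mem_range.mpr ha, mem_range.mpr hb⟩,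
          (cos_ang_iff hm ha hb).mp ((dist_pt_eq_one _ _).mp hd)⟩
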